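/- At the worst-case correlation, the better sensor gains nothing from collaboration in estimation: if |σX·b| < σY·|a| and ρ* = (σX·b)/(σY·a), then with v = (a,b), the bivariate Gaussian coalition Fisher information satisfies vᵀ Σ(ρ*)⁻¹ v = a²/σX², i.e., it equals the larger of the two individual Fisher informations a²/σX² and b²/σY². -/

import Mathlib

open Matrix

/-- at the worst-case correlation `ρ* = σX·b/(σY·a)` (which lies in (−1,1)
when `|σX·b| < σY·|a|`), the better sensor gains nothing from collaboration in
estimation: with `v = (a,b)`, the coalition Fisher information `vᵀ Σ(ρ*)⁻¹ v` equals
`a²/σX²`, the larger of the two individual Fisher informations. -/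
theorem fisher_worst_case_correlation (σX σY a b : ℝ) (hσX : 0 < σX) (hσY : 0 < σY)
    (ha : a ≠ 0) (hab : |σX * b| < σY * |a|)
    (ρstar : ℝ) (hρ : ρstar = σX * b / (σY * a)) :
    ![a, b] ⬝ᵥ ((!![σX ^ 2, ρstar * σX * σY; ρstar * σX * σY, σY ^ 2])⁻¹ *ᵥ ![a, b]) =
      a ^ 2 / σX ^ 2 := by
  have hσXne : σX ≠ 0 := hσX.ne'
  have hσYne : σY ≠ 0 := hσY.ne'
  have hρ2 : ρstar ^ 2 < 1 := by
    have h1 : |ρstar| < 1 := by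
      rw [hρ, abs_div, abs_mul σY a, abs_of_pos hσY, div_lt_one (by positivity)]
      exact hab
    calc ρstar ^ 2 = |ρstar| ^ 2 := by rw [sq_abs]
    _ < 1 := by nlinarith [abs_nonneg ρstar]
  have hdet : (!![σX ^ 2, ρstar * σX * σY; ρstar * σX * σY, σY ^ 2]).det ≠ 0 := by
    rw [Matrix.det_fin_two_of]
    have : σX ^ 2 * σY ^ 2 - ρstar * σX * σY * (ρstar * σX * σY)
        = σX ^ 2 * σY ^ 2 * (1 - ρstar ^ 2) := by ring
    rw [this]
    have := mul_pos (mul_pos (pow_pos hσX 2) (pow_pos hσY 2)) (sub_pos.2 hρ2)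
    exact this.ne'
  rw [Matrix.inv_def, Matrix.adjugate_fin_two_of, Ring.inverse_eq_inv',
    Matrix.det_fin_two_of]
  simp only [Matrix.smul_mulVec, Matrix.mulVec_cons, dotProduct,
    Fin.sum_univ_two, Matrix.cons_val_zero, Matrix.cons_val_one, Matrix.head_cons,
    Matrix.smul_cons, smul_eq_mul, Matrix.mulVec, Matrix.cons_dotProduct,
    Matrix.dotProduct_of_isEmpty, Pi.smul_apply, Matrix.smul_apply, Matrix.of_apply]
  have hd : σX ^ 2 * σY ^ 2 - ρstar * σX * σY * (ρstar * σX * σY) ≠ 0 := by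
    rwa [Matrix.det_fin_two_of] at hdet
  have hD : a ^ 2 * σY ^ 2 - b ^ 2 * σX ^ 2 ≠ 0 := by
    have h1 : |σX * b| ^ 2 < (σY * |a|) ^ 2 := by
      have := abs_nonneg (σX * b)
      nlinarith
    have h2 : σX ^ 2 * b ^ 2 < σY ^ 2 * a ^ 2 := by
      rw [mul_pow, sq_abs, mul_pow, sq_abs] at h1; linarith
    nlinarith
  rw [hρ] at hd ⊢
  field_simp at hd ⊢
  ring_nf at hd ⊢
  have hE : σX ^ 2 * σY ^ 5 * a ^ 3 - σX ^ 4 * σY ^ 3 * a * b ^ 2 ≠ 0 := by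
    have : σX ^ 2 * σY ^ 5 * a ^ 3 - σX ^ 4 * σY ^ 3 * a * b ^ 2
        = σX ^ 2 * σY ^ 3 * a * (a ^ 2 * σY ^ 2 - b ^ 2 * σX ^ 2) := by ring
    rw [this]
    exact mul_ne_zero (by positivity) hD
  field_simp [hE, show -(σX ^ 2 * b ^ 2) + σY ^ 2 * a ^ 2 ≠ 0 by contrapose! hD; linarith]
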